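/- Let P_N be the N×N nilpotent Jordan block. Fix ε > 0 and 0 < r < 1. Then for all sufficiently large N, the open disc D(0, r) is contained in the ε-pseudospectrum of P_N, i.e., for every z with |z| ≤ r and z ≠ 0, ‖(P_N - z)⁻¹‖ > 1/ε. -/

import Mathlib

/-- The `N×N` nilpotent Jordan block: ones on the superdiagonal, zeros elsewhere. -/
def jordanBlock (N : ℕ) : Matrix (Fin N) (Fin N) ℂ :=
  Matrix.of fun i j => if (j : ℕ) = (i : ℕ) + 1 then 1 else 0

lemma jordanBlock_det (N : ℕ) (z : ℂ) :
    (jordanBlock N - z • (1 : Matrix (Fin N) (Fin N) ℂ)).det = (-z) ^ N := by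
  have h : (jordanBlock N - z • (1 : Matrix (Fin N) (Fin N) ℂ)).BlockTriangular id := by
    intro i j hij
    simp only [id_eq] at hij
    simp only [Matrix.sub_apply, jordanBlock, Matrix.of_apply, Matrix.smul_apply,
      Matrix.one_apply, smul_eq_mul]
    rw [if_neg, if_neg]
    · simp
    · exact fun h => absurd h.symm (Fin.ne_of_lt hij)
    · omega
  rw [Matrix.det_of_upperTriangular h]
  have : ∀ i : Fin N, (jordanBlock N - z • (1 : Matrix (Fin N) (Fin N) ℂ)) i i = -z := by
    intro i
    simp [jordanBlock, Matrix.one_apply]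
  simp [this]

/-- For fixed `ε > 0` and `0 < r < 1`, for all sufficiently large `N` the disc
`D(0,r)` lies in the `ε`-pseudospectrum of `P_N`: for every `z ≠ 0` with `|z| ≤ r`,
the resolvent norm `‖(P_N - z)⁻¹‖` exceeds `1/ε`. -/
theorem disc_subset_pseudospectrum_jordanBlock (ε r : ℝ) (hε : 0 < ε)
    (hr0 : 0 < r) (hr1 : r < 1) :
    ∃ N₀ : ℕ, ∀ N ≥ N₀, ∀ z : ℂ, ‖z‖ ≤ r → z ≠ 0 →
      ‖Matrix.toEuclideanCLM (𝕜 := ℂ)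
          ((jordanBlock N - z • (1 : Matrix (Fin N) (Fin N) ℂ))⁻¹)‖ > 1 / ε := by
  obtain ⟨n, hn⟩ := exists_pow_lt_of_lt_one hε hr1
  refine ⟨max n 1, fun N hN z hz hz0 => ?_⟩
  have hN1 : 1 ≤ N := le_trans (le_max_right n 1) hN
  have hNn : n ≤ N := le_trans (le_max_left n 1) hN
  have hrN : r ^ N < ε :=
    lt_of_le_of_lt (pow_le_pow_of_le_one hr0.le hr1.le hNn) hn
  have hrNpos : 0 < r ^ N := pow_pos hr0 N
  set M := jordanBlock N - z • (1 : Matrix (Fin N) (Fin N) ℂ) with hM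
  -- invertibility
  have hdet : M.det = (-z) ^ N := jordanBlock_det N z
  have hdet0 : IsUnit M.det := by
    rw [hdet]; exact (isUnit_iff_ne_zero.mpr (pow_ne_zero N (neg_ne_zero.mpr hz0)))
  have hinv : M⁻¹ * M = 1 := Matrix.nonsing_inv_mul M hdet0
  -- the quasimode
  set x : Fin N → ℂ := fun i => z ^ (i : ℕ) with hx
  set e : EuclideanSpace ℂ (Fin N) := (WithLp.equiv 2 _).symm x with he
  have hNpos : 0 < N := hN1
  set iN : Fin N := ⟨N - 1, by omega⟩ with hiN
  -- compute M.mulVec x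
  have hmul : M.mulVec x = Pi.single iN (-z ^ N) := by
    funext i
    simp only [Matrix.mulVec, dotProduct, hM, Matrix.sub_apply, jordanBlock,
      Matrix.of_apply, Matrix.smul_apply, Matrix.one_apply, smul_eq_mul, sub_mul, hx]
    rw [Finset.sum_sub_distrib]
    have h1 : ∑ j : Fin N, (if (j : ℕ) = (i : ℕ) + 1 then (1 : ℂ) else 0) * z ^ (j : ℕ)
        = if h : (i : ℕ) + 1 < N then z ^ ((i : ℕ) + 1) else 0 := by
      split_ifs with h
      · rw [Finset.sum_eq_single (⟨(i : ℕ) + 1, h⟩ : Fin N)]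
        · simp
        · intro b _ hb
          rw [if_neg, zero_mul]
          intro hc
          exact hb (Fin.ext hc)
        · simp
      · apply Finset.sum_eq_zero
        intro j _
        rw [if_neg, zero_mul]
        intro hc
        omega
    have h2 : ∑ j : Fin N, (z * if i = j then (1:ℂ) else 0) * z ^ (j : ℕ)
        = z ^ ((i : ℕ) + 1) := by
      rw [Finset.sum_eq_single i]
      · rw [if_pos rfl, mul_one, pow_succ, mul_comm]
      · intro b _ hb
        rw [if_neg (fun hc => hb hc.symm), mul_zero, zero_mul]
      · simp
    rw [h1, h2]
    by_cases hi : (i : ℕ) + 1 < N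
    · rw [dif_pos hi, sub_self, Pi.single_apply, if_neg, ]
      intro hc
      rw [hc] at hi
      simp only [hiN] at hi
      omega
    · have hieq : i = iN := by
        apply Fin.ext
        simp only [hiN]
        omega
      rw [dif_neg hi, hieq, Pi.single_eq_same]
      have : (iN : ℕ) + 1 = N := by simp only [hiN]; omega
      rw [this]
      ring
  -- apply M⁻¹ to M e
  set A := Matrix.toEuclideanCLM (𝕜 := ℂ) M⁻¹ with hA
  have hAe : A (Matrix.toEuclideanCLM (𝕜 := ℂ) M e) = e := by
    have := congrArg (Matrix.toEuclideanCLM (𝕜 := ℂ)) hinv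
    rw [map_mul, map_one] at this
    calc A (Matrix.toEuclideanCLM (𝕜 := ℂ) M e)
        = (A * Matrix.toEuclideanCLM (𝕜 := ℂ) M) e := rfl
      _ = e := by rw [this]; rfl
  -- norm of M e
  have hMe : Matrix.toEuclideanCLM (𝕜 := ℂ) M e = EuclideanSpace.single iN (-z ^ N) := by
    rw [he, WithLp.equiv_symm_apply, Matrix.toEuclideanCLM_toLp, hmul]
    exact EuclideanSpace.toLp_single (𝕜 := ℂ) iN (-z ^ N)
  have hnormMe : ‖Matrix.toEuclideanCLM (𝕜 := ℂ) M e‖ = ‖z‖ ^ N := by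
    rw [hMe, EuclideanSpace.norm_single]
    simp
  -- norm of e at least 1
  have hnorme : 1 ≤ ‖e‖ := by
    rw [EuclideanSpace.norm_eq]
    rw [show (1 : ℝ) = Real.sqrt 1 by simp]
    apply Real.sqrt_le_sqrt
    have h0 : (⟨0, hNpos⟩ : Fin N) ∈ Finset.univ := Finset.mem_univ _
    have he0 : e (⟨0, hNpos⟩ : Fin N) = 1 := by
      show x ⟨0, hNpos⟩ = 1
      simp [hx]
    calc (1 : ℝ) = ‖e (⟨0, hNpos⟩ : Fin N)‖ ^ 2 := by rw [he0]; simp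
      _ ≤ ∑ i, ‖e i‖ ^ 2 :=
          Finset.single_le_sum (f := fun i => ‖e i‖ ^ 2) (fun i _ => sq_nonneg _) h0
  -- combine
  have hbound : 1 ≤ ‖A‖ * r ^ N := by
    calc (1 : ℝ) ≤ ‖e‖ := hnorme
      _ = ‖A (Matrix.toEuclideanCLM (𝕜 := ℂ) M e)‖ := by rw [hAe]
      _ ≤ ‖A‖ * ‖Matrix.toEuclideanCLM (𝕜 := ℂ) M e‖ := A.le_opNorm _
      _ = ‖A‖ * ‖z‖ ^ N := by rw [hnormMe]
      _ ≤ ‖A‖ * r ^ N := by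
          apply mul_le_mul_of_nonneg_left _ (norm_nonneg A)
          exact pow_le_pow_left₀ (norm_nonneg z) hz N
  have hAge : 1 / r ^ N ≤ ‖A‖ := by
    rw [div_le_iff₀ hrNpos]
    linarith
  have : 1 / ε < 1 / r ^ N := one_div_lt_one_div_of_lt hrNpos hrN
  exact lt_of_lt_of_le this hAge
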